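/- Let m ≥ 1 and let t ≥ m be such that 2 divides C(t, m). Then EGZ_t^{(m)}(ℤ_2) = t + 2^{ν₂(m)}. That is: every sequence over ℤ/2ℤ of length t + 2^{ν₂(m)} contains a length-t subsequence S' with e_m(S') = 0 in ℤ/2ℤ, and there exists a sequence of length t + 2^{ν₂(m)} − 1 with no such subsequence. -/

import Mathlib

open Finset

/-- The `m`-th elementary symmetric expression of the subsequence of `g` selected
by the index set `J`. -/
def eSym {n : ℕ} {R : Type*} [CommRing R] (m : ℕ) (g : Fin n → R) (J : Finset (Fin n)) : R :=
  ∑ T ∈ J.powersetCard m, ∏ i ∈ T, g i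

lemma eSym_eq_choose {n : ℕ} (m : ℕ) (g : Fin n → ZMod 2) (J : Finset (Fin n)) :
    eSym m g J = (Nat.choose (J.filter fun i => g i ≠ 0).card m : ZMod 2) := by
  classical
  have hone : ∀ x : ZMod 2, x ≠ 0 → x = 1 := by decide
  have h1 : ∀ T ∈ J.powersetCard m, ∏ i ∈ T, g i =
      if T ∈ (J.filter fun i => g i ≠ 0).powersetCard m then 1 else 0 := by
    intro T hT
    rw [mem_powersetCard] at hT
    by_cases h : ∀ i ∈ T, g i ≠ 0
    · rw [if_pos (mem_powersetCard.2 ⟨fun i hi => mem_filter.2 ⟨hT.1 hi, h i hi⟩, hT.2⟩)]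
      exact Finset.prod_eq_one fun i hi => hone _ (h i hi)
    · push_neg at h
      obtain ⟨i, hiT, hgi⟩ := h
      rw [if_neg, Finset.prod_eq_zero hiT hgi]
      intro hmem
      exact (mem_filter.1 ((mem_powersetCard.1 hmem).1 hiT)).2 hgi
  rw [eSym, Finset.sum_congr rfl h1, Finset.sum_ite_mem,
    Finset.inter_eq_right.2 (Finset.powersetCard_mono (filter_subset _ _)),
    Finset.sum_const, card_powersetCard]
  simp

lemma exists_J {n : ℕ} (g : Fin n → ZMod 2) (t x : ℕ)
    (hx : x ≤ (univ.filter fun i => g i ≠ 0).card)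
    (hxt : x ≤ t)
    (hz : t - x ≤ (univ.filter fun i => g i = 0).card) :
    ∃ J : Finset (Fin n), J.card = t ∧ (J.filter fun i => g i ≠ 0).card = x := by
  classical
  obtain ⟨A, hA, hAc⟩ := Finset.exists_subset_card_eq hx
  obtain ⟨B, hB, hBc⟩ := Finset.exists_subset_card_eq hz
  have hAne : ∀ i ∈ A, g i ≠ 0 := fun i hi => (mem_filter.1 (hA hi)).2
  have hBeq : ∀ i ∈ B, g i = 0 := fun i hi => (mem_filter.1 (hB hi)).2
  have hdisj : Disjoint A B := by
    rw [Finset.disjoint_left]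
    intro i hiA hiB
    exact hAne i hiA (hBeq i hiB)
  refine ⟨A ∪ B, ?_, ?_⟩
  · rw [card_union_of_disjoint hdisj, hAc, hBc]; omega
  · rw [filter_union, Finset.filter_true_of_mem hAne,
      Finset.filter_false_of_mem (fun i hi h => h (hBeq i hi)),
      union_empty, hAc]

lemma even_choose_of_bit {a x m : ℕ} (hm : m / 2 ^ a % 2 = 1) (hx : x / 2 ^ a % 2 = 0) :
    2 ∣ Nat.choose x m := by
  haveI : Fact (Nat.Prime 2) := ⟨Nat.prime_two⟩
  have h := Choose.choose_modEq_choose_mul_prod_range_choose (p := 2) (n := x) (k := m) (a + 1)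
  have hz : (∏ i ∈ Finset.range (a + 1), Nat.choose (x / 2 ^ i % 2) (m / 2 ^ i % 2)) = 0 := by
    apply Finset.prod_eq_zero (Finset.self_mem_range_succ a)
    rw [hm, hx]
    rfl
  rw [hz] at h
  have h2 : (2 : ℤ) ∣ (Nat.choose x m : ℤ) := by
    have := h.dvd
    simpa using this
  exact_mod_cast h2

lemma odd_choose_add {a m r : ℕ} (hm : 2 ^ a ∣ m) (hr : r < 2 ^ a) :
    ¬ 2 ∣ Nat.choose (m + r) m := by
  rw [← emultiplicity_eq_zero (a := (2:ℕ)) (b := Nat.choose (m + r) m)]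
  have h := Nat.Prime.emultiplicity_choose' (p := 2) (n := r) (k := m)
    (b := Nat.log 2 (r + m) + 1) Nat.prime_two (Nat.lt_succ_self _)
  rw [Nat.add_comm m r, h]
  norm_cast
  rw [Finset.card_eq_zero, Finset.filter_eq_empty_iff]
  intro i hi
  rw [Finset.mem_Ico] at hi
  push_neg
  rcases le_or_gt i a with hia | hia
  · have h0 : m % 2 ^ i = 0 :=
      Nat.eq_zero_of_dvd_of_lt ((Nat.dvd_mod_iff dvd_rfl).2 ((pow_dvd_pow 2 hia).trans hm))
        (Nat.mod_lt _ (pow_pos (by norm_num : (0:ℕ) < 2) i))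
    rw [h0, zero_add]
    exact Nat.mod_lt _ (pow_pos (by norm_num : (0:ℕ) < 2) i)
  · have hd : 2 ^ a ∣ m % 2 ^ i := (Nat.dvd_mod_iff (pow_dvd_pow 2 hia.le)).2 hm
    obtain ⟨u, hu⟩ := hd
    have hlt : m % 2 ^ i < 2 ^ i := Nat.mod_lt _ (pow_pos (by norm_num : (0:ℕ) < 2) i)
    have h2i : 2 ^ i = 2 ^ a * 2 ^ (i - a) := by
      rw [← pow_add]
      congr 1
      omega
    have hu' : u < 2 ^ (i - a) := by
      by_contra hge
      push_neg at hge
      have : 2 ^ i ≤ m % 2 ^ i := by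
        rw [hu, h2i]
        exact Nat.mul_le_mul_left _ hge
      omega
    have hsum : m % 2 ^ i + 2 ^ a ≤ 2 ^ i := by
      rw [hu, h2i, ← Nat.mul_succ]
      exact Nat.mul_le_mul_left _ hu'
    have hrle : r % 2 ^ i ≤ r := Nat.mod_le _ _
    omega

lemma card_filter_val_lt (n c : ℕ) (h : c ≤ n) :
    (univ.filter fun i : Fin n => (i : ℕ) < c).card = c := by
  classical
  have key : (univ.filter fun i : Fin n => (i : ℕ) < c)
      = Finset.map (Fin.castLEEmb h) univ := by
    ext i
    simp only [mem_filter, mem_univ, true_and, Finset.mem_map]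
    constructor
    · intro hi
      exact ⟨⟨(i : ℕ), hi⟩, by ext; simp [Fin.castLEEmb, Fin.castLE]⟩
    · rintro ⟨j, rfl⟩
      simp [Fin.castLEEmb, Fin.castLE]
  rw [key, Finset.card_map, Finset.card_univ, Fintype.card_fin]

theorem stmt_8 (m t : ℕ) (hm : 1 ≤ m) (htm : m ≤ t) (hdvd : 2 ∣ Nat.choose t m) :
    (∀ n : ℕ, t + 2 ^ padicValNat 2 m ≤ n → ∀ g : Fin n → ZMod 2,
      ∃ J : Finset (Fin n), J.card = t ∧ eSym m g J = 0) ∧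
    (∃ g : Fin (t + 2 ^ padicValNat 2 m - 1) → ZMod 2,
      ∀ J : Finset (Fin (t + 2 ^ padicValNat 2 m - 1)), J.card = t → eSym m g J ≠ 0) := by
  classical
  haveI : Fact (Nat.Prime 2) := ⟨Nat.prime_two⟩
  set a := padicValNat 2 m with ha
  have hpa : 2 ^ a ∣ m := pow_padicValNat_dvd
  have h2am : 2 ^ a ≤ m := Nat.le_of_dvd (by omega) hpa
  have hbit : m / 2 ^ a % 2 = 1 := by
    have hnd := pow_succ_padicValNat_not_dvd (p := 2) (Nat.one_le_iff_ne_zero.1 hm)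
    obtain ⟨m', hm'⟩ := hpa
    have hpos : 0 < 2 ^ a := pow_pos (by norm_num : (0:ℕ) < 2) a
    rw [hm', Nat.mul_div_cancel_left _ hpos]
    have : m' % 2 ≠ 0 := by
      intro h0
      apply hnd
      rw [← ha, hm', pow_succ]
      exact mul_dvd_mul_left _ (Nat.dvd_of_mod_eq_zero h0)
    omega
  have hpow : 2 ^ (a + 1) = 2 * 2 ^ a := by rw [pow_succ]; ring
  have hpos : 0 < 2 ^ a := pow_pos (by norm_num : (0:ℕ) < 2) a
  constructor
  · intro n hn g
    set k := (univ.filter fun i : Fin n => g i ≠ 0).card with hk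
    set z := (univ.filter fun i : Fin n => g i = 0).card with hz
    have hkz : k + z = n := by
      have h := Finset.card_filter_add_card_filter_not
        (s := (univ : Finset (Fin n))) (p := fun i => g i ≠ 0)
      simp only [not_not, ne_eq, Finset.card_univ, Fintype.card_fin] at h
      rw [hk, hz]
      simpa using h
    obtain ⟨x, hxk, hxt, hzx, hxchoose⟩ :
        ∃ x, x ≤ k ∧ x ≤ t ∧ t - x ≤ z ∧ 2 ∣ Nat.choose x m := by
      rcases le_or_gt t k with h1 | h1
      · exact ⟨t, h1, le_refl t, by omega, hdvd⟩
      rcases le_or_gt t z with h2 | h2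
      · exact ⟨0, Nat.zero_le _, Nat.zero_le _, by omega,
          by simp [Nat.choose_eq_zero_of_lt (show (0:ℕ) < m by omega)]⟩
      · set lo := t - z with hlo
        have hmod := Nat.div_add_mod lo (2 ^ (a + 1))
        have hsmall : lo % 2 ^ (a + 1) < 2 ^ (a + 1) := Nat.mod_lt _ (by positivity)
        have hmul : 2 ^ a * 2 = 2 ^ (a + 1) := (pow_succ 2 a).symm
        rcases lt_or_ge (lo % 2 ^ (a + 1)) (2 ^ a) with hs | hs
        · refine ⟨lo, by omega, by omega, by omega, even_choose_of_bit hbit ?_⟩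
          rw [← Nat.mod_mul_right_div_self, hmul]
          exact Nat.div_eq_of_lt hs
        · set q := lo / 2 ^ (a + 1) with hq
          have hox : 2 ^ (a + 1) * (q + 1) = 2 ^ (a + 1) * q + 2 ^ (a + 1) := by ring
          refine ⟨2 ^ (a + 1) * (q + 1), by omega, by omega, by omega,
            even_choose_of_bit hbit ?_⟩
          rw [← Nat.mod_mul_right_div_self, hmul, Nat.mul_mod_right]
          simp
    obtain ⟨J, hJcard, hJx⟩ := exists_J g t x hxk hxt hzx
    refine ⟨J, hJcard, ?_⟩
    rw [eSym_eq_choose, hJx]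
    exact (ZMod.natCast_eq_zero_iff _ 2).2 hxchoose
  · set N := t + 2 ^ a - 1 with hN
    set c := m + 2 ^ a - 1 with hc
    have hcN : c ≤ N := by omega
    refine ⟨fun i => if (i : ℕ) < c then 1 else 0, ?_⟩
    intro J hJ
    rw [eSym_eq_choose]
    set g : Fin N → ZMod 2 := fun i => if (i : ℕ) < c then 1 else 0 with hg
    set x := (J.filter fun i => g i ≠ 0).card with hx
    have hones : x ≤ c := by
      rw [← card_filter_val_lt N c hcN]
      apply Finset.card_le_card
      intro i hi
      rw [mem_filter] at hi ⊢
      refine ⟨mem_univ _, ?_⟩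
      by_contra hlt
      exact hi.2 (by rw [hg]; simp [hlt])
    have hzeros : (J.filter fun i => g i = 0).card ≤ N - c := by
      have hsub : (J.filter fun i => g i = 0) ⊆ (univ.filter fun i : Fin N => ¬ (i : ℕ) < c) := by
        intro i hi
        rw [mem_filter] at hi ⊢
        refine ⟨mem_univ _, ?_⟩
        intro hlt
        rw [hg] at hi
        simp [hlt] at hi
      have hcard : (univ.filter fun i : Fin N => ¬ (i : ℕ) < c).card = N - c := by
        have h := Finset.card_filter_add_card_filter_not
          (s := (univ : Finset (Fin N))) (p := fun i : Fin N => (i : ℕ) < c)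
        rw [card_filter_val_lt N c hcN, Finset.card_univ, Fintype.card_fin] at h
        omega
      exact le_trans (Finset.card_le_card hsub) (le_of_eq hcard)
    have hsplit : x + (J.filter fun i => g i = 0).card = t := by
      have h := Finset.card_filter_add_card_filter_not
        (s := J) (p := fun i => g i ≠ 0)
      simp only [not_not, ne_eq] at h
      rw [hJ] at h
      rw [hx]
      simpa using h
    have hmx : m ≤ x := by omega
    have hr : x - m < 2 ^ a := by omega
    intro hcast
    rw [ZMod.natCast_eq_zero_iff] at hcast
    have : x = m + (x - m) := by omega
    rw [this] at hcast
    exact odd_choose_add hpa hr hcast
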